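/- Let M ∈ ℝ^{n×n} be a Z-matrix and p ∈ ℝⁿ with p > 0 such that the system Mᵀu = p − slack is feasible: concretely, suppose [Mᵀ | I] y = p has a feasible solution y ≥ 0 and M is a K-matrix. Then every feasible basic solution of [Mᵀ|I]y = p, y ≥ 0 corresponding to a complementary basis B satisfies ([Mᵀ|I]_B)⁻¹ p > 0; i.e., every complementary basis is a nondegenerate feasible basis. -/

import Mathlib

open Matrix

/-- A square real matrix is a P-matrix if all of its principal minors are positive. -/
def IsPMat {n : ℕ} (M : Matrix (Fin n) (Fin n) ℝ) : Prop :=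
  ∀ S : Finset (Fin n),
    0 < (M.submatrix (Subtype.val : {i // i ∈ S} → Fin n) Subtype.val).det

/-- A Z-matrix has nonpositive off-diagonal entries. -/
def IsZMat {n : ℕ} (M : Matrix (Fin n) (Fin n) ℝ) : Prop :=
  ∀ i j, i ≠ j → M i j ≤ 0

/-- The representative (complementary) submatrix of `[Mᵀ | I]` determined by a
choice `ε`: column `j` is column `j` of `Mᵀ` if `ε j` is true, and column `j` of
the identity otherwise. -/
def repSub {n : ℕ} (M : Matrix (Fin n) (Fin n) ℝ) (ε : Fin n → Bool) :
    Matrix (Fin n) (Fin n) ℝ :=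
  Matrix.of fun i j => if ε j then Mᵀ i j else (1 : Matrix (Fin n) (Fin n) ℝ) i j

/-- Principal minors indexed by injective maps are positive for a P-matrix. -/
lemma det_submatrix_pos_of_isPMat {N : ℕ} {A : Matrix (Fin N) (Fin N) ℝ}
    (hA : IsPMat A) {m : ℕ} (f : Fin m → Fin N) (hf : Function.Injective f) :
    0 < (A.submatrix f f).det := by
  classical
  set S : Finset (Fin N) := Finset.univ.image f with hS
  have hmem : ∀ i, f i ∈ S := fun i => Finset.mem_image_of_mem f (Finset.mem_univ i)
  let g : Fin m → {i // i ∈ S} := fun i => ⟨f i, hmem i⟩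
  have hginj : Function.Injective g := fun a b h => hf (congrArg Subtype.val h)
  have hcard : Fintype.card (Fin m) = Fintype.card {i // i ∈ S} := by
    rw [Fintype.card_fin, Fintype.card_coe, hS, Finset.card_image_of_injective _ hf,
      Finset.card_univ, Fintype.card_fin]
  have hbij : Function.Bijective g :=
    (Fintype.bijective_iff_injective_and_card g).mpr ⟨hginj, hcard⟩
  let e := Equiv.ofBijective g hbij
  have h1 : A.submatrix f f
      = (A.submatrix (Subtype.val : {i // i ∈ S} → Fin N) Subtype.val).submatrix e e := rfl
  rw [h1, Matrix.det_submatrix_equiv_self]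
  exact hA S

lemma repSub_minor_pos {N : ℕ} (M : Matrix (Fin N) (Fin N) ℝ) (hP : IsPMat M)
    (ε : Fin N → Bool) : ∀ (m : ℕ) (f : Fin m → Fin N), Function.Injective f →
    0 < ((repSub M ε).submatrix f f).det := by
  intro m
  induction m with
  | zero => intro f hf; simp [Matrix.det_fin_zero]
  | succ m ih =>
    intro f hf
    by_cases hall : ∃ j, ε (f j) = false
    · obtain ⟨j, hj⟩ := hall
      have hcol : ∀ i, ((repSub M ε).submatrix f f) i j = if i = j then 1 else 0 := by
        intro i
        simp only [Matrix.submatrix_apply, repSub, Matrix.of_apply, hj, Bool.false_eq_true,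
          if_false, Matrix.one_apply, hf.eq_iff]
      rw [Matrix.det_succ_column _ j, Finset.sum_eq_single j]
      · rw [hcol j, if_pos rfl]
        have hpow : ((-1 : ℝ)) ^ ((j : ℕ) + (j : ℕ)) = 1 := by
          rw [pow_add]
          rcases neg_one_pow_eq_or ℝ (j : ℕ) with h | h <;> rw [h] <;> norm_num
        rw [hpow]
        simp only [one_mul, mul_one]
        
        have : ((repSub M ε).submatrix f f).submatrix j.succAbove j.succAbove
            = (repSub M ε).submatrix (f ∘ j.succAbove) (f ∘ j.succAbove) := rfl
        rw [this]
        exact ih _ (hf.comp (Fin.succAbove_right_injective))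
      · intro i _ hij
        rw [hcol i, if_neg hij]; ring
      · intro h; exact absurd (Finset.mem_univ j) h
    · push_neg at hall
      have hT : (repSub M ε).submatrix f f = (M.submatrix f f)ᵀ := by
        ext i k
        have : ε (f k) = true := by
          cases h : ε (f k) with
          | false => exact absurd h (hall k)
          | true => rfl
        simp [repSub, this, Matrix.transpose_apply]
      rw [hT, Matrix.det_transpose]
      exact det_submatrix_pos_of_isPMat hP f hf

/-- Key lemma: a Z-matrix with all principal minors positive maps a positive
vector onto any prescribed positive vector. -/
lemma kmat_solve : ∀ (N : ℕ) (A : Matrix (Fin N) (Fin N) ℝ),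
    (∀ i j, i ≠ j → A i j ≤ 0) →
    (∀ (m : ℕ) (f : Fin m → Fin N), Function.Injective f → 0 < (A.submatrix f f).det) →
    ∀ q : Fin N → ℝ, (∀ i, 0 < q i) → ∃ x, A.mulVec x = q ∧ ∀ i, 0 < x i := by
  intro N
  induction N with
  | zero =>
    intro A _ _ q _
    exact ⟨0, funext (fun i => i.elim0), fun i => i.elim0⟩
  | succ N ih =>
    intro A hZ hm q hq
    have ha : 0 < A 0 0 := by
      have h1 := hm 1 (fun _ => 0) (fun a b _ => Subsingleton.elim a b)
      simpa [Matrix.det_fin_one] using h1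
    set a := A 0 0 with haa
    -- Schur complement
    set D : Matrix (Fin N) (Fin N) ℝ :=
      Matrix.of (fun i j => A i.succ j.succ - A i.succ 0 * A 0 j.succ / a) with hD
    have hDZ : ∀ i j, i ≠ j → D i j ≤ 0 := by
      intro i j hij
      have h1 : A i.succ j.succ ≤ 0 := hZ _ _ (fun h => hij (Fin.succ_injective _ h))
      have h2 : A i.succ 0 ≤ 0 := hZ _ _ (Fin.succ_ne_zero i)
      have h3 : A 0 j.succ ≤ 0 := hZ _ _ (Fin.succ_ne_zero j).symm
      have h4 : 0 ≤ A i.succ 0 * A 0 j.succ / a := by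
        apply div_nonneg _ ha.le
        nlinarith
      simp only [hD, Matrix.of_apply]
      linarith
    have hDm : ∀ (m : ℕ) (f : Fin m → Fin N), Function.Injective f →
        0 < (D.submatrix f f).det := by
      intro m f hf
      set g : Fin (m + 1) → Fin (N + 1) := Fin.cons 0 (Fin.succ ∘ f) with hg
      have hginj : Function.Injective g := by
        rw [hg, Fin.cons_injective_iff]
        constructor
        · rintro ⟨i, hi⟩; exact (Fin.succ_ne_zero (f i)) hi
        · exact (Fin.succ_injective N).comp hf
      set B : Matrix (Fin (m + 1)) (Fin (m + 1)) ℝ := A.submatrix g g with hB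
      have hBdet : 0 < B.det := hm (m + 1) g hginj
      have hB00 : B 0 0 = a := by simp [hB, hg]; rfl
      set C : Matrix (Fin (m + 1)) (Fin (m + 1)) ℝ :=
        Matrix.of (fun i j => if i = 0 then B 0 j else B i j - B i 0 / a * B 0 j) with hC
      have hdetBC : B.det = C.det := by
        apply Matrix.det_eq_of_forall_row_eq_smul_add_const
          (fun i => if i = 0 then 0 else B i 0 / a) 0 (if_pos rfl)
        intro i j
        by_cases hi : i = 0
        · simp [hC, hi]
        · simp only [hC, Matrix.of_apply, if_neg hi, eq_self_iff_true, if_true]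
          ring
      have hC0 : ∀ i, C i 0 = if i = 0 then a else 0 := by
        intro i
        by_cases hi : i = 0
        · simp [hC, hi, hB00]
        · simp only [hC, Matrix.of_apply, if_neg hi, hB00]
          field_simp
          ring
      have hCsub : C.submatrix Fin.succ Fin.succ = D.submatrix f f := by
        ext i j
        simp only [Matrix.submatrix_apply, hC, Matrix.of_apply,
          if_neg (Fin.succ_ne_zero i), hB, hg,
          Fin.cons_succ, Function.comp_apply, Fin.cons_zero, hD,
          Fin.succ_ne_zero, if_false, iff_false, if_neg]
        ring
      have hdetC : C.det = a * (D.submatrix f f).det := by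
        rw [Matrix.det_succ_column_zero, Finset.sum_eq_single 0]
        · rw [hC0 0, if_pos rfl]
          simp only [Fin.val_zero, pow_zero, one_mul, Fin.succAbove_zero]
          rw [hCsub]
        · intro i _ hi
          rw [hC0 i, if_neg hi]; ring
        · intro h; exact absurd (Finset.mem_univ 0) h
      have : 0 < a * (D.submatrix f f).det := by rw [← hdetC, ← hdetBC]; exact hBdet
      nlinarith
    set q' : Fin N → ℝ := fun i => q i.succ - A i.succ 0 * q 0 / a with hq'def
    have hq' : ∀ i, 0 < q' i := by
      intro i
      have h2 : A i.succ 0 ≤ 0 := hZ _ _ (Fin.succ_ne_zero i)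
      have : A i.succ 0 * q 0 / a ≤ 0 := by
        apply div_nonpos_of_nonpos_of_nonneg _ ha.le
        nlinarith [hq 0]
      have := hq i.succ
      simp only [hq'def]
      linarith
    obtain ⟨x', hx', hx'pos⟩ := ih D hDZ hDm q' hq'
    set S : ℝ := ∑ j, A 0 j.succ * x' j with hSdef
    have hSnonpos : S ≤ 0 := by
      apply Finset.sum_nonpos
      intro j _
      have h3 : A 0 j.succ ≤ 0 := hZ _ _ (Fin.succ_ne_zero j).symm
      nlinarith [hx'pos j]
    set x : Fin (N + 1) → ℝ := Fin.cons ((q 0 - S) / a) x' with hx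
    have hxrow : ∀ i, (A.mulVec x) i = A i 0 * ((q 0 - S) / a) + ∑ j, A i j.succ * x' j := by
      intro i
      simp only [Matrix.mulVec, dotProduct, Fin.sum_univ_succ, hx, Fin.cons_zero, Fin.cons_succ]
    have hDrow : ∀ i, ∑ j, D i j * x' j = q' i := by
      intro i
      have := congrFun hx' i
      simpa [Matrix.mulVec, dotProduct] using this
    refine ⟨x, ?_, ?_⟩
    · funext i
      induction i using Fin.cases with
      | zero =>
        rw [hxrow 0]
        rw [← hSdef]  -- ensure S
        field_simp
        rw [← haa]; ring
      | succ i =>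
        rw [hxrow i.succ]
        have h1 := hDrow i
        have h2 : ∑ j, D i j * x' j
            = (∑ j, A i.succ j.succ * x' j) - A i.succ 0 / a * S := by
          rw [hSdef, Finset.mul_sum, ← Finset.sum_sub_distrib]
          apply Finset.sum_congr rfl
          intro j _
          simp only [hD, Matrix.of_apply]
          ring
        rw [h2, hq'def] at h1
        have hane : a ≠ 0 := ha.ne'
        field_simp at h1 ⊢
        linarith
    · intro i
      induction i using Fin.cases with
      | zero =>
        simp only [hx, Fin.cons_zero]
        apply div_pos _ ha
        have := hq 0
        linarith
      | succ i =>
        simpa [hx, Fin.cons_succ] using hx'pos i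

theorem kMatrix_all_complementary_bases_feasible {n : ℕ}
    (M : Matrix (Fin n) (Fin n) ℝ) (hZ : IsZMat M) (hP : IsPMat M)
    (p : Fin n → ℝ) (hp : ∀ i, 0 < p i)
    (hfeas : ∃ y₁ y₂ : Fin n → ℝ, (∀ i, 0 ≤ y₁ i) ∧ (∀ i, 0 ≤ y₂ i) ∧
      Mᵀ.mulVec y₁ + y₂ = p) :
    ∀ ε : Fin n → Bool, IsUnit (repSub M ε).det ∧
      ∀ i, 0 < ((repSub M ε)⁻¹.mulVec p) i := by
  intro ε
  have hZ' : ∀ i j, i ≠ j → repSub M ε i j ≤ 0 := by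
    intro i j hij
    simp only [repSub, Matrix.of_apply]
    split_ifs with h
    · exact hZ j i (Ne.symm hij)
    · rw [Matrix.one_apply_ne hij]
  have hm := repSub_minor_pos M hP ε
  have hdet : 0 < (repSub M ε).det := by
    have := hm n id Function.injective_id
    rwa [Matrix.submatrix_id_id] at this
  have hu : IsUnit (repSub M ε).det := isUnit_iff_ne_zero.mpr hdet.ne'
  obtain ⟨x, hx, hxpos⟩ := kmat_solve n (repSub M ε) hZ' hm p hp
  refine ⟨hu, ?_⟩
  have hinv : (repSub M ε)⁻¹.mulVec p = x := by
    rw [← hx, Matrix.mulVec_mulVec, Matrix.nonsing_inv_mul _ hu, Matrix.one_mulVec]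
  rw [hinv]
  exact hxpos
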